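/- Let $s_n$ be the test statistic on data vectors that returns $1$ if the first component of the vector contains the nonce (i.e., satisfies a fixed predicate $n$) and $0$ otherwise. For the one-tailed permutation test $\mathsf{pt}(s,\vec{y}) = \frac{1}{|\vec{y}|!} \sum_{\pi \in \Pi(|\vec{y}|)} I[s(\vec{y}) \leq s(\pi(\vec{y}))]$, if the first component of $\vec{y}$ satisfies the predicate $n$, then $\mathsf{pt}(s_n, \vec{y}) = \mathsf{count}(\vec{y}, n)/|\vec{y}|$, where $\mathsf{count}(\vec{y},n)$ is the number of components of $\vec{y}$ satisfying $n$. -/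

import Mathlib

open scoped Classical

/-- One-tailed (signed) permutation test p-value. -/
noncomputable def pt {R : Type*} (m : ℕ) (s : (Fin m → R) → ℝ) (y : Fin m → R) : ℝ :=
  (∑ π : Equiv.Perm (Fin m), if s y ≤ s (y ∘ π) then (1 : ℝ) else 0) / (Nat.factorial m)

lemma fiber_card_eq {m : ℕ} (a j k : Fin m) :
    (Finset.univ.filter fun π : Equiv.Perm (Fin m) => π a = j).card =
    (Finset.univ.filter fun π : Equiv.Perm (Fin m) => π a = k).card := by
  apply Finset.card_bij' (fun π _ => π.trans (Equiv.swap j k))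
    (fun π _ => π.trans (Equiv.swap j k))
  · intro π _; ext x; simp
  · intro π _; ext x; simp
  · intro π hπ
    simp only [Finset.mem_filter, Finset.mem_univ, true_and] at hπ ⊢
    simp [hπ]
  · intro π hπ
    simp only [Finset.mem_filter, Finset.mem_univ, true_and] at hπ ⊢
    simp [hπ, Equiv.swap_apply_right]

lemma fiber_card {m : ℕ} (hm : 0 < m) (a j : Fin m) :
    (Finset.univ.filter fun π : Equiv.Perm (Fin m) => π a = j).card =
      Nat.factorial (m - 1) := by
  have hsum : ∑ k : Fin m,
      (Finset.univ.filter fun π : Equiv.Perm (Fin m) => π a = k).card =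
      Nat.factorial m := by
    rw [← Finset.card_eq_sum_card_fiberwise (fun π _ => Finset.mem_univ (π a))]
    simp [Fintype.card_perm, Fintype.card_fin]
  rw [Finset.sum_congr rfl (fun k _ => fiber_card_eq a k j)] at hsum
  rw [Finset.sum_const, Finset.card_univ, Fintype.card_fin, smul_eq_mul] at hsum
  have hfac : m * Nat.factorial (m - 1) = Nat.factorial m := Nat.mul_factorial_pred hm.ne'
  exact Nat.eq_of_mul_eq_mul_left hm (by rw [hsum, hfac])

/-- for the nonce-indicator statistic `s_n` (1 iff the first component
satisfies `n`), if the first component of `y` satisfies `n`, then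
`pt(s_n, y) = count(y, n) / |y|`. -/
theorem pt_nonce_eq_count_div_length
    {R : Type*} (m : ℕ) (hm : 0 < m) (n : R → Prop)
    (y : Fin m → R) (h1 : n (y ⟨0, hm⟩)) :
    pt m (fun v => if n (v ⟨0, hm⟩) then (1 : ℝ) else 0) y =
      ((Finset.univ.filter fun j : Fin m => n (y j)).card : ℝ) / m := by
  set a : Fin m := ⟨0, hm⟩ with ha
  unfold pt
  have hstep : ∀ π : Equiv.Perm (Fin m),
      (if (if n (y a) then (1:ℝ) else 0) ≤ (if n ((y ∘ π) a) then (1:ℝ) else 0)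
        then (1:ℝ) else 0) = if n (y (π a)) then (1:ℝ) else 0 := by
    intro π
    simp only [Function.comp_apply, if_pos h1]
    by_cases h : n (y (π a)) <;> simp [h]
  rw [Finset.sum_congr rfl (fun π _ => hstep π)]
  have hsplit : (∑ π : Equiv.Perm (Fin m), if n (y (π a)) then (1:ℝ) else 0) =
      ∑ j : Fin m, ∑ π ∈ (Finset.univ.filter fun π : Equiv.Perm (Fin m) => π a = j),
        if n (y (π a)) then (1:ℝ) else 0 :=
    (Finset.sum_fiberwise_of_maps_to (fun π _ => Finset.mem_univ (π a)) _).symm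
  rw [hsplit]
  have hinner : ∀ j : Fin m,
      (∑ π ∈ (Finset.univ.filter fun π : Equiv.Perm (Fin m) => π a = j),
        if n (y (π a)) then (1:ℝ) else 0) =
      (Nat.factorial (m - 1) : ℝ) * (if n (y j) then (1:ℝ) else 0) := by
    intro j
    rw [Finset.sum_congr rfl (fun π hπ => by
      rw [(Finset.mem_filter.mp hπ).2])]
    rw [Finset.sum_const, fiber_card hm a j, nsmul_eq_mul]
  rw [Finset.sum_congr rfl (fun j _ => hinner j), ← Finset.mul_sum]
  rw [Finset.sum_boole]
  have hne : (Nat.factorial (m-1) : ℝ) ≠ 0 := Nat.cast_ne_zero.mpr (Nat.factorial_ne_zero _)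
  have hmf : (Nat.factorial m : ℝ) = (m : ℝ) * (Nat.factorial (m-1) : ℝ) := by
    rw [← Nat.cast_mul, Nat.mul_factorial_pred hm.ne']
  rw [hmf]
  field_simp
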